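/- Let cap be a credit network on a finite type V and let σ and σ' be two states such that σ' is cycle-reachable from σ. Then for every pair of vertices s ≠ t, the unit transaction (s,t) is feasible in σ if and only if it is feasible in σ'. -/

import Mathlib

open Finset

/-- A state of a credit network with capacities `cap`: `σ u v + σ v u = cap u v`. -/
def IsState {V : Type*} (cap σ : V → V → ℕ) : Prop :=
  ∀ u v : V, σ u v + σ v u = cap u v

/-- The score vector of a state: total capacity on outgoing edges of each vertex. -/
def score {V : Type*} [Fintype V] (σ : V → V → ℕ) (v : V) : ℕ := ∑ u, σ v u

/-- `u : Fin (k+1) → V` is a feasible path for a unit payment from `s` to `t` in state `σ`. -/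
def FeasiblePath {V : Type*} (σ : V → V → ℕ) (s t : V) (k : ℕ) (u : Fin (k + 1) → V) : Prop :=
  1 ≤ k ∧ Function.Injective u ∧ u 0 = s ∧ u (Fin.last k) = t ∧
    ∀ i : Fin k, 1 ≤ σ (u i.succ) (u i.castSucc)

/-- The unit transaction `(s,t)` is feasible in `σ`. -/
def Feasible {V : Type*} (σ : V → V → ℕ) (s t : V) : Prop :=
  ∃ (k : ℕ) (u : Fin (k + 1) → V), FeasiblePath σ s t k u

/-- `σ'` is the result of routing a unit payment along the path `u` in `σ`. -/
def RouteResult {V : Type*} (σ σ' : V → V → ℕ) (k : ℕ) (u : Fin (k + 1) → V) : Prop :=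
  (∀ i : Fin k,
      σ' (u i.succ) (u i.castSucc) = σ (u i.succ) (u i.castSucc) - 1 ∧
      σ' (u i.castSucc) (u i.succ) = σ (u i.castSucc) (u i.succ) + 1) ∧
  ∀ x y : V,
    (∀ i : Fin k, ¬(x = u i.succ ∧ y = u i.castSucc) ∧ ¬(x = u i.castSucc ∧ y = u i.succ)) →
    σ' x y = σ x y

/-- `σ'` is obtained from `σ` by routing a unit payment from `s` to `t` along some feasible path. -/
def RoutesUnit {V : Type*} (σ σ' : V → V → ℕ) (s t : V) : Prop :=
  ∃ (k : ℕ) (u : Fin (k + 1) → V), FeasiblePath σ s t k u ∧ RouteResult σ σ' k u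

/-- `σ'` is obtained from `σ` by routing a unit payment around one feasible cycle
(a cyclically ordered list of at least 3 pairwise distinct vertices). -/
def CycleStep {V : Type*} (σ σ' : V → V → ℕ) : Prop :=
  ∃ (k : ℕ) (u : Fin (k + 3) → V),
    Function.Injective u ∧
    (∀ i : Fin (k + 3), 1 ≤ σ (u (i + 1)) (u i)) ∧
    (∀ i : Fin (k + 3),
        σ' (u (i + 1)) (u i) = σ (u (i + 1)) (u i) - 1 ∧
        σ' (u i) (u (i + 1)) = σ (u i) (u (i + 1)) + 1) ∧
    ∀ x y : V,
      (∀ i : Fin (k + 3), ¬(x = u (i + 1) ∧ y = u i) ∧ ¬(x = u i ∧ y = u (i + 1))) →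
      σ' x y = σ x y

/-- `σ'` is cycle-reachable from `σ`: obtainable by routing units around finitely many
feasible cycles. -/
def CycleReachable {V : Type*} (σ σ' : V → V → ℕ) : Prop :=
  Relation.ReflTransGen CycleStep σ σ'

section Helpers

variable {α : Type*} {V : Type*}
open Fin.NatCast Fin.CommRing

lemma my_not_nodup_decomp : ∀ (l : List α), ¬ l.Nodup →
    ∃ (a : α) (l1 l2 l3 : List α), l = l1 ++ a :: l2 ++ a :: l3 := by
  intro l
  induction l with
  | nil => intro h; exact absurd List.nodup_nil h
  | cons x xs ih =>
    intro h
    by_cases hx : x ∈ xs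
    · obtain ⟨s, t, rfl⟩ := List.append_of_mem hx
      exact ⟨x, [], s, t, by simp⟩
    · have hxs : ¬ xs.Nodup := by
        intro hn; exact h (List.nodup_cons.2 ⟨hx, hn⟩)
      obtain ⟨a, l1, l2, l3, rfl⟩ := ih hxs
      exact ⟨a, x :: l1, l2, l3, by simp⟩

lemma my_chain'_cut {R : α → α → Prop} (xs ys zs : List α) (a : α)
    (h : List.IsChain R (xs ++ a :: ys ++ a :: zs)) : List.IsChain R (xs ++ a :: zs) := by
  rw [List.isChain_append] at h ⊢
  obtain ⟨h1, h2, h3⟩ := h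
  obtain ⟨hx1, hx2, hx3⟩ := List.isChain_append.1 h1
  refine ⟨hx1, h2, ?_⟩
  intro x hx y hy
  simp only [List.head?_cons, Option.mem_def, Option.some.injEq] at hy
  subst hy
  exact hx3 x hx a (by simp)

lemma my_cut_head (xs ys zs : List α) (a : α) :
    (xs ++ a :: zs).head? = (xs ++ a :: ys ++ a :: zs).head? := by
  cases xs <;> simp

lemma my_cut_last (xs ys zs : List α) (a : α) :
    (xs ++ a :: zs).getLast? = (xs ++ a :: ys ++ a :: zs).getLast? := by
  rw [List.getLast?_append_of_ne_nil _ (List.cons_ne_nil a zs),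
    List.getLast?_append_of_ne_nil _ (List.cons_ne_nil a zs)]

lemma my_dedup {R : α → α → Prop} : ∀ (n : ℕ) (l : List α), l.length ≤ n → l.IsChain R →
    ∀ s t, l.head? = some s → l.getLast? = some t →
    ∃ m : List α, m.IsChain R ∧ m.head? = some s ∧ m.getLast? = some t ∧ m.Nodup := by
  intro n
  induction n with
  | zero =>
    intro l hl _ s t hs _
    interval_cases hll : l.length
    · simp [List.length_eq_zero_iff.1 hll] at hs
  | succ n ih =>
    intro l hl hc s t hs ht
    by_cases hn : l.Nodup
    · exact ⟨l, hc, hs, ht, hn⟩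
    · obtain ⟨a, l1, l2, l3, rfl⟩ := my_not_nodup_decomp l hn
      refine ih (l1 ++ a :: l3) ?_ (my_chain'_cut _ _ _ _ hc) s t ?_ ?_
      · have := hl; simp at this ⊢; omega
      · rw [my_cut_head l1 l2 l3 a]; exact hs
      · rw [my_cut_last l1 l2 l3 a]; exact ht

lemma feasible_to_walk {σ : V → V → ℕ} {s t : V} (h : Feasible σ s t) :
    Relation.ReflTransGen (fun a b => 1 ≤ σ b a) s t := by
  obtain ⟨k, u, _, _, h0, hl, he⟩ := h
  have key : ∀ i : Fin (k + 1), Relation.ReflTransGen (fun a b => 1 ≤ σ b a) (u 0) (u i) := by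
    intro i
    induction i using Fin.induction with
    | zero => exact Relation.ReflTransGen.refl
    | succ j ih => exact ih.tail (he j)
  rw [← h0, ← hl]
  exact key _

lemma walk_to_feasible {σ : V → V → ℕ} {s t : V} (hst : s ≠ t)
    (h : Relation.ReflTransGen (fun a b => 1 ≤ σ b a) s t) : Feasible σ s t := by
  obtain ⟨l, hc, hlast⟩ := List.exists_isChain_cons_of_relationReflTransGen h
  have hc' : List.IsChain (fun a b => 1 ≤ σ b a) (s :: l) := hc
  obtain ⟨m, hmc, hmh, hml, hmnd⟩ := my_dedup (s :: l).length (s :: l) le_rfl hc' s t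
    (by simp) (by rw [List.getLast?_eq_getLast (List.cons_ne_nil _ _), hlast])
  have hne : m ≠ [] := by rintro rfl; simp at hmh
  have hlen : 2 ≤ m.length := by
    rcases m with _ | ⟨x, _ | ⟨y, m'⟩⟩
    · simp at hmh
    · simp at hmh hml
      exact absurd (hmh.symm.trans hml) hst
    · simp
  set k := m.length - 1 with hk
  have hke : m.length = k + 1 := by omega
  refine ⟨k, fun i => m.get (Fin.cast hke.symm i), by omega, ?_, ?_, ?_, ?_⟩
  · exact (List.nodup_iff_injective_get.1 hmnd).comp fun a b hab => by
      simpa [Fin.ext_iff] using hab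
  · rw [List.head?_eq_head hne] at hmh
    simp only [Option.some.injEq] at hmh
    show m.get ⟨0, by omega⟩ = s
    rw [← hmh]
    simp [List.get_eq_getElem, List.getElem_zero]
  · rw [List.getLast?_eq_getLast hne] at hml
    simp only [Option.some.injEq] at hml
    show m.get ⟨k, by omega⟩ = t
    rw [← hml, List.getLast_eq_getElem]
    simp [List.get_eq_getElem, hk]
  · intro i
    have := List.isChain_iff_getElem.1 hmc i.val (by omega)
    convert this using 3 <;> simp [Fin.ext_iff]

lemma cycle_edge {σ σ' : V → V → ℕ} (hstep : CycleStep σ σ') {a b : V}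
    (hab : 1 ≤ σ b a) : Relation.ReflTransGen (fun x y => 1 ≤ σ' y x) a b := by
  obtain ⟨k, u, hinj, hfeas, hdec, hoff⟩ := hstep
  by_cases h1 : ∃ i : Fin (k + 3), b = u (i + 1) ∧ a = u i
  · -- go around the cycle the other way
    obtain ⟨i, rfl, rfl⟩ := h1
    have key : ∀ n : ℕ, Relation.ReflTransGen (fun x y => 1 ≤ σ' y x)
        (u i) (u (i - (n : Fin (k + 3)))) := by
      intro n
      induction n with
      | zero => simpa using Relation.ReflTransGen.refl
      | succ n ih =>
        refine ih.tail ?_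
        have e : (i - ((n + 1 : ℕ) : Fin (k + 3))) + 1 = i - (n : Fin (k + 3)) := by
          push_cast; ring
        have := (hdec (i - ((n + 1 : ℕ) : Fin (k + 3)))).2
        rw [e] at this
        show 1 ≤ σ' (u (i - ((n + 1 : ℕ) : Fin (k + 3)))) (u (i - (n : Fin (k + 3))))
        omega
    have e2 : i - ((k + 2 : ℕ) : Fin (k + 3)) = i + 1 := by
      have h0 : ((k + 3 : ℕ) : Fin (k + 3)) = 0 := Fin.natCast_self (k + 3)
      push_cast at h0 ⊢
      linear_combination -h0
    have := key (k + 2)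
    rwa [e2] at this
  · refine Relation.ReflTransGen.single ?_
    show 1 ≤ σ' b a
    by_cases h2 : ∃ i : Fin (k + 3), b = u i ∧ a = u (i + 1)
    · obtain ⟨i, rfl, rfl⟩ := h2
      have := (hdec i).2
      omega
    · push_neg at h1 h2
      rw [hoff b a (fun i => ⟨by
        intro ⟨hb, ha⟩; exact (h1 i hb) ha, by
        intro ⟨hb, ha⟩; exact (h2 i hb) ha⟩)]
      exact hab

lemma cycleStep_symm {σ σ' : V → V → ℕ} (hstep : CycleStep σ σ') : CycleStep σ' σ := by
  obtain ⟨k, u, hinj, hfeas, hdec, hoff⟩ := hstep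
  refine ⟨k, fun i => u (-i), hinj.comp neg_injective, ?_, ?_, ?_⟩
  · intro i
    have := (hdec (-(i + 1))).2
    have e : (-(i + 1) : Fin (k + 3)) + 1 = -i := by ring
    rw [e] at this
    simp only
    omega
  · intro i
    have e : (-(i + 1) : Fin (k + 3)) + 1 = -i := by ring
    have h2 := (hdec (-(i + 1))).2
    have h1 := (hdec (-(i + 1))).1
    have hf := hfeas (-(i + 1))
    rw [e] at h2 h1 hf
    simp only
    omega
  · intro x y hxy
    refine (hoff x y ?_).symm
    intro i
    have := hxy (-(i + 1))
    have e1 : (-(-(i + 1) + 1) : Fin (k + 3)) = i := by ring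
    have e2 : (-(-(i + 1)) : Fin (k + 3)) = i + 1 := neg_neg _
    simp only [e1, e2] at this
    exact ⟨this.2, this.1⟩

lemma walk_mono {σ σ' : V → V → ℕ} (hstep : CycleStep σ σ') {s t : V}
    (h : Relation.ReflTransGen (fun a b => 1 ≤ σ b a) s t) :
    Relation.ReflTransGen (fun a b => 1 ≤ σ' b a) s t := by
  induction h with
  | refl => exact Relation.ReflTransGen.refl
  | tail h1 h2 ih => exact ih.trans (cycle_edge hstep h2)

lemma cycle_feasible {σ σ' : V → V → ℕ} (hstep : CycleStep σ σ') {s t : V} (hst : s ≠ t)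
    (h : Feasible σ s t) : Feasible σ' s t :=
  walk_to_feasible hst (walk_mono hstep (feasible_to_walk h))

end Helpers

theorem stmt2 {V : Type*} [Fintype V]
    (cap : V → V → ℕ) (hcap_symm : ∀ u v : V, cap u v = cap v u)
    (hcap_diag : ∀ v : V, cap v v = 0)
    (σ σ' : V → V → ℕ) (hσ : IsState cap σ) (hσ' : IsState cap σ')
    (h : CycleReachable σ σ') :
    ∀ s t : V, s ≠ t → (Feasible σ s t ↔ Feasible σ' s t) := by
  clear hσ hσ'
  induction h with
  | refl => intro s t _; rfl
  | tail hab hbc ih =>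
    intro s t hst
    rw [ih s t hst]
    exact ⟨cycle_feasible hbc hst, cycle_feasible (cycleStep_symm hbc) hst⟩
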